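/- Let W be the real vector space of n×n Hermitian complex matrices. For traceless Hermitian a define Y_a : W → W by Y_a(ξ) := a⊙ξ − Tr(aξ)·ξ, and X_a : W → W by X_a(ξ) := [[ξ, a]] = (i/2)(ξa − aξ). With the vector-field commutator [F, G](ξ) := DG(ξ)[F(ξ)] − DF(ξ)[G(ξ)], one has [Y_a, Y_b] = −X_{[[a,b]]} for all traceless Hermitian a, b. Together with the other two relations this means the gradient-like and Hamiltonian vector fields associated with traceless Hermitian matrices close on a realization of the Lie algebra sl(n, ℂ). -/
import Mathlib


open Matrix

attribute [local instance] Matrix.frobeniusNormedAddCommGroup Matrix.frobeniusNormedSpace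

/-- The Jordan product of two complex matrices: `x ⊙ y = (xy + yx)/2`. -/
noncomputable def jordanProd {n : ℕ} (x y : Matrix (Fin n) (Fin n) ℂ) :
    Matrix (Fin n) (Fin n) ℂ :=
  (1 / 2 : ℂ) • (x * y + y * x)

/-- The Lie product of two complex matrices: `[[x, y]] = (i/2)(xy − yx)`. -/
noncomputable def lieProd {n : ℕ} (x y : Matrix (Fin n) (Fin n) ℂ) :
    Matrix (Fin n) (Fin n) ℂ :=
  (Complex.I / 2) • (x * y - y * x)

/-- The Hamiltonian vector field associated with a (traceless Hermitian) matrix `a`: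
`X_a(ξ) := [[ξ, a]]`. -/
noncomputable def hamVF {n : ℕ} (a : Matrix (Fin n) (Fin n) ℂ) :
    Matrix (Fin n) (Fin n) ℂ → Matrix (Fin n) (Fin n) ℂ :=
  fun ξ => lieProd ξ a

/-- The gradient-like vector field associated with a (traceless Hermitian) matrix `a`:
`Y_a(ξ) := a ⊙ ξ − Tr(aξ)·ξ`. -/
noncomputable def gradVF {n : ℕ} (a : Matrix (Fin n) (Fin n) ℂ) :
    Matrix (Fin n) (Fin n) ℂ → Matrix (Fin n) (Fin n) ℂ :=
  fun ξ => jordanProd a ξ - (Matrix.trace (a * ξ)) • ξ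


noncomputable def jmapAux {n : ℕ} (b : Matrix (Fin n) (Fin n) ℂ) :
    Matrix (Fin n) (Fin n) ℂ →ₗ[ℝ] Matrix (Fin n) (Fin n) ℂ where
  toFun v := jordanProd b v
  map_add' x y := by simp [jordanProd, mul_add, add_mul]; abel
  map_smul' r x := by
    simp [jordanProd, Matrix.mul_smul, Matrix.smul_mul, smul_add, smul_comm r]

noncomputable def tmapAux {n : ℕ} (b : Matrix (Fin n) (Fin n) ℂ) :
    Matrix (Fin n) (Fin n) ℂ →ₗ[ℝ] ℂ where
  toFun v := Matrix.trace (b * v)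
  map_add' x y := by simp [mul_add]
  map_smul' r x := by simp [Matrix.mul_smul]

lemma fderiv_gradVF {n : ℕ} (b ξ v : Matrix (Fin n) (Fin n) ℂ) :
    fderiv ℝ (gradVF b) ξ v =
      jordanProd b v - Matrix.trace (b * v) • ξ - Matrix.trace (b * ξ) • v := by
  have h1 : HasFDerivAt (fun x => jordanProd b x) (jmapAux b).toContinuousLinearMap ξ :=
    (jmapAux b).toContinuousLinearMap.hasFDerivAt
  have h2 : HasFDerivAt (fun x => Matrix.trace (b * x)) (tmapAux b).toContinuousLinearMap ξ :=
    (tmapAux b).toContinuousLinearMap.hasFDerivAt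
  have h3 : HasFDerivAt (fun x : Matrix (Fin n) (Fin n) ℂ => x)
      (ContinuousLinearMap.id ℝ _) ξ := hasFDerivAt_id ξ
  have hh : HasFDerivAt (gradVF b)
      ((jmapAux b).toContinuousLinearMap -
        (Matrix.trace (b * ξ) • ContinuousLinearMap.id ℝ _ +
          ((tmapAux b).toContinuousLinearMap).smulRight ξ)) ξ := h1.sub (h2.smul h3)
  rw [hh.fderiv]
  simp [jmapAux, tmapAux]
  abel

lemma key_gradVF {n : ℕ} (a b ξ : Matrix (Fin n) (Fin n) ℂ) :
    (jordanProd b (gradVF a ξ) - Matrix.trace (b * gradVF a ξ) • ξ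
        - Matrix.trace (b * ξ) • gradVF a ξ) -
      (jordanProd a (gradVF b ξ) - Matrix.trace (a * gradVF b ξ) • ξ
        - Matrix.trace (a * ξ) • gradVF b ξ) = -(hamVF (lieProd a b) ξ) := by
  have c1 : Matrix.trace (b * (ξ * a)) = Matrix.trace (a * (b * ξ)) := by
    rw [← mul_assoc, ← mul_assoc, Matrix.trace_mul_cycle]
  have c2 : Matrix.trace (a * (ξ * b)) = Matrix.trace (b * (a * ξ)) := by
    rw [← mul_assoc, ← mul_assoc, Matrix.trace_mul_cycle]
  simp only [gradVF, jordanProd, hamVF, lieProd, mul_add, add_mul, mul_sub, sub_mul,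
    smul_add, smul_sub, Matrix.mul_smul, Matrix.smul_mul, smul_smul, trace_add,
    trace_sub, trace_smul, mul_assoc, c1, c2, smul_eq_mul]
  match_scalars <;> ring_nf <;> simp [Complex.I_sq] <;> ring

/-- On the real vector space of Hermitian matrices, the gradient-like vector fields
`Y_a(ξ) = a ⊙ ξ − Tr(aξ)·ξ` associated with traceless Hermitian matrices satisfy
`[Y_a, Y_b] = −X_{[[a,b]]}` (with `X_c(ξ) = [[ξ, c]]`), where the commutator of vector
fields is `[F, G](ξ) := DG(ξ)[F(ξ)] − DF(ξ)[G(ξ)]` with `D` the Fréchet derivative.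
Together with the other two relations, the gradient-like and Hamiltonian vector fields
close on a realization of the Lie algebra `sl(n, ℂ)`. -/
theorem gradVF_commutator {n : ℕ} (a b : Matrix (Fin n) (Fin n) ℂ)
    (ha : a.IsHermitian) (hb : b.IsHermitian)
    (ha0 : a.trace = 0) (hb0 : b.trace = 0) :
    ∀ ξ : Matrix (Fin n) (Fin n) ℂ, ξ.IsHermitian →
      fderiv ℝ (gradVF b) ξ (gradVF a ξ) - fderiv ℝ (gradVF a) ξ (gradVF b ξ) =
        -(hamVF (lieProd a b) ξ) := by
  intro ξ _
  rw [fderiv_gradVF, fderiv_gradVF]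
  exact key_gradVF a b ξ
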